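/- Let (Ω, ℱ, ℙ) be a probability space, ε ≥ 0, and θ, θ⁺ : Ω → ℝⁿ square-integrable random vectors satisfying 𝔼[‖θ⁺ − G(θ)‖₂²] ≤ ε, where G(θ) := (ΦᵀDΦ)⁻¹ΦᵀD(R + γPΦθ). Then 𝔼[‖Φθ⁺ − Φθ*‖_D²] ≤ ((1+γ²)/(1−γ²)) λ_max(ΦᵀDΦ) ε + ((1+γ²)/2) 𝔼[‖Φθ − Φθ*‖_D²], where θ* := −(ΦᵀD(γP − I)Φ)⁻¹ΦᵀDR. -/

import Mathlib

open Matrix BigOperators MeasureTheory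


section TD18aux
namespace TD18

variable {N n : ℕ}

lemma sqD_eq (d : Fin N → ℝ) (v : Fin N → ℝ) :
    v ⬝ᵥ (Matrix.diagonal d).mulVec v = ∑ i, d i * v i ^ 2 := by
  simp only [dotProduct, Matrix.mulVec_diagonal]
  exact Finset.sum_congr rfl fun i _ => by ring

lemma qd_nonneg {d : Fin N → ℝ} (hd : ∀ i, 0 ≤ d i) (v : Fin N → ℝ) :
    0 ≤ ∑ i, d i * v i ^ 2 :=
  Finset.sum_nonneg fun i _ => mul_nonneg (hd i) (sq_nonneg _)

lemma wCS {d : Fin N → ℝ} (hd : ∀ i, 0 ≤ d i) (u v : Fin N → ℝ) :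
    (∑ i, d i * (u i * v i)) ^ 2 ≤ (∑ i, d i * u i ^ 2) * (∑ i, d i * v i ^ 2) := by
  have h := Finset.sum_mul_sq_le_sq_mul_sq Finset.univ
    (fun i => Real.sqrt (d i) * u i) (fun i => Real.sqrt (d i) * v i)
  have e1 : ∀ i : Fin N, (Real.sqrt (d i) * u i) * (Real.sqrt (d i) * v i)
      = d i * (u i * v i) := fun i => by
    have : Real.sqrt (d i) * Real.sqrt (d i) = d i := Real.mul_self_sqrt (hd i)
    linear_combination (u i * v i) * this
  have e2 : ∀ i : Fin N, (Real.sqrt (d i) * u i) ^ 2 = d i * u i ^ 2 := fun i => by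
    have : Real.sqrt (d i) * Real.sqrt (d i) = d i := Real.mul_self_sqrt (hd i)
    linear_combination (u i ^ 2) * this
  have e3 : ∀ i : Fin N, (Real.sqrt (d i) * v i) ^ 2 = d i * v i ^ 2 := fun i => by
    have : Real.sqrt (d i) * Real.sqrt (d i) = d i := Real.mul_self_sqrt (hd i)
    linear_combination (v i ^ 2) * this
  simpa only [e1, e2, e3] using h

lemma scalar_peter {t : ℝ} (ht : 0 < t) (a b : ℝ) :
    (a + b) ^ 2 ≤ (1 + t) * a ^ 2 + (1 + t⁻¹) * b ^ 2 := by
  have h1 : t * t⁻¹ = 1 := mul_inv_cancel₀ ht.ne'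
  have h2 : 0 ≤ t⁻¹ * (t * a - b) ^ 2 :=
    mul_nonneg (inv_nonneg.mpr ht.le) (sq_nonneg _)
  nlinarith [h2, h1, ht]

lemma qd_add_le {d : Fin N → ℝ} (hd : ∀ i, 0 ≤ d i) {t : ℝ} (ht : 0 < t)
    (a b : Fin N → ℝ) :
    (∑ i, d i * (a i + b i) ^ 2) ≤
      (1 + t) * (∑ i, d i * a i ^ 2) + (1 + t⁻¹) * (∑ i, d i * b i ^ 2) := by
  rw [Finset.mul_sum, Finset.mul_sum, ← Finset.sum_add_distrib]
  refine Finset.sum_le_sum fun i _ => ?_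
  have := scalar_peter ht (a i) (b i)
  nlinarith [hd i, this]

lemma P_nonexpansive {d : Fin N → ℝ} (hd : ∀ i, 0 ≤ d i)
    {P : Matrix (Fin N) (Fin N) ℝ}
    (hPnonneg : ∀ i j, 0 ≤ P i j) (hProw : ∀ i, ∑ j, P i j = 1)
    (hstat : Matrix.vecMul d P = d) (v : Fin N → ℝ) :
    (∑ i, d i * (P.mulVec v i) ^ 2) ≤ ∑ i, d i * v i ^ 2 := by
  have key : ∀ i, (P.mulVec v i) ^ 2 ≤ ∑ j, P i j * v j ^ 2 := by
    intro i
    have h := Finset.sum_mul_sq_le_sq_mul_sq Finset.univ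
      (fun j => Real.sqrt (P i j)) (fun j => Real.sqrt (P i j) * v j)
    have e1 : ∀ j : Fin N, Real.sqrt (P i j) * (Real.sqrt (P i j) * v j) = P i j * v j := by
      intro j
      rw [← mul_assoc, Real.mul_self_sqrt (hPnonneg i j)]
    have e2 : ∀ j : Fin N, (Real.sqrt (P i j)) ^ 2 = P i j := fun j =>
      Real.sq_sqrt (hPnonneg i j)
    have e3 : ∀ j : Fin N, (Real.sqrt (P i j) * v j) ^ 2 = P i j * v j ^ 2 := fun j => by
      rw [mul_pow, e2]
    simp only [e1, e2, e3, hProw i, one_mul] at h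
    simpa [Matrix.mulVec, dotProduct] using h
  calc (∑ i, d i * (P.mulVec v i) ^ 2)
      ≤ ∑ i, d i * ∑ j, P i j * v j ^ 2 :=
        Finset.sum_le_sum fun i _ => mul_le_mul_of_nonneg_left (key i) (hd i)
    _ = ∑ j, (∑ i, d i * P i j) * v j ^ 2 := by
        simp_rw [Finset.mul_sum, Finset.sum_mul]
        rw [Finset.sum_comm]
        exact Finset.sum_congr rfl fun j _ => Finset.sum_congr rfl fun i _ => by ring
    _ = ∑ j, d j * v j ^ 2 := by
        refine Finset.sum_congr rfl fun j _ => ?_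
        have : Matrix.vecMul d P j = d j := congrFun hstat j
        simp only [Matrix.vecMul, dotProduct] at this
        rw [this]

lemma dot_conj (k : ℕ) (M : Matrix (Fin N) (Fin k) ℝ) (D' : Matrix (Fin N) (Fin N) ℝ)
    (w : Fin k → ℝ) :
    (M.mulVec w) ⬝ᵥ (D'.mulVec (M.mulVec w)) = w ⬝ᵥ ((Mᵀ * D' * M).mulVec w) := by
  rw [Matrix.dotProduct_mulVec, Matrix.dotProduct_mulVec]
  rw [← Matrix.vecMul_transpose, Matrix.vecMul_vecMul, Matrix.mul_assoc,
    Matrix.dotProduct_mulVec, Matrix.vecMul_vecMul]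

lemma rayleigh (hm : 0 < m) {A : Matrix (Fin m) (Fin m) ℝ} (hA : A.IsHermitian)
    (v : Fin m → ℝ) :
    v ⬝ᵥ A.mulVec v ≤ (⨆ i, hA.eigenvalues i) * (v ⬝ᵥ v) := by
  have : Nonempty (Fin m) := ⟨⟨0, hm⟩⟩
  set U : Matrix (Fin m) (Fin m) ℝ := (hA.eigenvectorUnitary : Matrix (Fin m) (Fin m) ℝ) with hU
  have hspec : A = U * Matrix.diagonal hA.eigenvalues * Uᵀ := by
    have h := hA.spectral_theorem
    rwa [Unitary.conjStarAlgAut_apply, RCLike.ofReal_real_eq_id, Function.id_comp, Matrix.star_eq_conjTranspose,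
      Matrix.conjTranspose_eq_transpose_of_trivial] at h
  have hUU : U * Uᵀ = 1 := by
    have h := (Matrix.mem_unitaryGroup_iff).mp (hA.eigenvectorUnitary).2
    rwa [Matrix.star_eq_conjTranspose, Matrix.conjTranspose_eq_transpose_of_trivial] at h
  set w := Uᵀ.mulVec v with hw
  have key := dot_conj m Uᵀ (Matrix.diagonal hA.eigenvalues) v
  rw [Matrix.transpose_transpose] at key
  have h1 : v ⬝ᵥ A.mulVec v = w ⬝ᵥ (Matrix.diagonal hA.eigenvalues).mulVec w := by
    conv_lhs => rw [hspec]
    exact key.symm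
  have h2 : w ⬝ᵥ w = v ⬝ᵥ v := by
    have := dot_conj m Uᵀ 1 v
    rw [Matrix.one_mulVec, Matrix.transpose_transpose] at this
    rw [hw, this, Matrix.mul_one, hUU, Matrix.one_mulVec]
  have hbdd : BddAbove (Set.range hA.eigenvalues) := (Set.finite_range _).bddAbove
  have hle : ∀ i, hA.eigenvalues i ≤ ⨆ i, hA.eigenvalues i := fun i => le_ciSup hbdd i
  calc v ⬝ᵥ A.mulVec v = ∑ i, hA.eigenvalues i * w i ^ 2 := by
        rw [h1]; simp only [dotProduct, Matrix.mulVec_diagonal]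
        exact Finset.sum_congr rfl fun i _ => by ring
    _ ≤ ∑ i, (⨆ j, hA.eigenvalues j) * w i ^ 2 :=
        Finset.sum_le_sum fun i _ => mul_le_mul_of_nonneg_right (hle i) (sq_nonneg _)
    _ = (⨆ i, hA.eigenvalues i) * (v ⬝ᵥ v) := by
        rw [← Finset.mul_sum, ← h2]
        congr 1
        simp only [dotProduct]
        exact Finset.sum_congr rfl fun i _ => by ring

lemma proj_matrix_id (Φ : Matrix (Fin N) (Fin n) ℝ) (d : Fin N → ℝ)
    (hsym : (Φᵀ * Matrix.diagonal d * Φ)ᵀ = Φᵀ * Matrix.diagonal d * Φ)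
    (hinv : IsUnit (Φᵀ * Matrix.diagonal d * Φ).det) :
    (Φ * (Φᵀ * Matrix.diagonal d * Φ)⁻¹ * (Φᵀ * Matrix.diagonal d))ᵀ * Matrix.diagonal d *
      (Φ * (Φᵀ * Matrix.diagonal d * Φ)⁻¹ * (Φᵀ * Matrix.diagonal d)) =
    Matrix.diagonal d * (Φ * (Φᵀ * Matrix.diagonal d * Φ)⁻¹ * (Φᵀ * Matrix.diagonal d)) := by
  set D := Matrix.diagonal d with hD
  set A := Φᵀ * D * Φ with hA
  have hDT : Dᵀ = D := Matrix.diagonal_transpose d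
  have hAiT : (A⁻¹)ᵀ = A⁻¹ := by
    rw [Matrix.transpose_nonsing_inv, hsym]
  have hPiT : (Φ * A⁻¹ * (Φᵀ * D))ᵀ = D * Φ * A⁻¹ * Φᵀ := by
    rw [Matrix.transpose_mul, Matrix.transpose_mul, Matrix.transpose_mul,
      Matrix.transpose_transpose, hDT, hAiT]
    simp only [Matrix.mul_assoc]
  rw [hPiT]
  have hmid : Φᵀ * (D * (Φ * (A⁻¹ * (Φᵀ * D)))) = Φᵀ * D := by
    rw [← Matrix.mul_assoc, ← Matrix.mul_assoc, ← Matrix.mul_assoc, ← hA,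
      ← Matrix.mul_assoc, Matrix.mul_nonsing_inv _ hinv, Matrix.one_mul]
  calc D * Φ * A⁻¹ * Φᵀ * D * (Φ * A⁻¹ * (Φᵀ * D))
      = D * (Φ * (A⁻¹ * (Φᵀ * (D * (Φ * (A⁻¹ * (Φᵀ * D))))))) := by
        simp only [Matrix.mul_assoc]
    _ = D * (Φ * (A⁻¹ * (Φᵀ * D))) := by rw [hmid]
    _ = D * (Φ * A⁻¹ * (Φᵀ * D)) := by simp only [Matrix.mul_assoc]

lemma proj_nonexpansive {d : Fin N → ℝ} (hd : ∀ i, 0 ≤ d i)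
    (Φ : Matrix (Fin N) (Fin n) ℝ)
    (hsym : (Φᵀ * Matrix.diagonal d * Φ)ᵀ = Φᵀ * Matrix.diagonal d * Φ)
    (hinv : IsUnit (Φᵀ * Matrix.diagonal d * Φ).det)
    (w : Fin N → ℝ) :
    (∑ i, d i *
      (((Φ * (Φᵀ * Matrix.diagonal d * Φ)⁻¹ * (Φᵀ * Matrix.diagonal d)).mulVec w) i) ^ 2)
      ≤ ∑ i, d i * w i ^ 2 := by
  set Pi := Φ * (Φᵀ * Matrix.diagonal d * Φ)⁻¹ * (Φᵀ * Matrix.diagonal d) with hPi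
  set X := ∑ i, d i * ((Pi.mulVec w) i) ^ 2 with hX
  set S := ∑ i, d i * w i ^ 2 with hS
  have hX0 : 0 ≤ X := qd_nonneg hd _
  have hS0 : 0 ≤ S := qd_nonneg hd _
  have hXdot : X = (Pi.mulVec w) ⬝ᵥ (Matrix.diagonal d).mulVec (Pi.mulVec w) := by
    simp only [dotProduct, Matrix.mulVec_diagonal]
    exact (Finset.sum_congr rfl fun i _ => by ring)
  have hXd : X = ∑ i, d i * (w i * (Pi.mulVec w) i) := by
    rw [hXdot, dot_conj N Pi (Matrix.diagonal d) w, proj_matrix_id Φ d hsym hinv,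
      ← Matrix.mulVec_mulVec]
    simp only [dotProduct, Matrix.mulVec_diagonal]
    exact (Finset.sum_congr rfl fun i _ => by ring)
  have hcs : X ^ 2 ≤ S * X := by
    have := wCS hd w (Pi.mulVec w)
    rw [← hXd] at this
    exact this
  rcases le_or_gt X S with h | h
  · exact h
  · exfalso; nlinarith [hcs, hS0, h]

lemma mulVec_injective_of_rank {Φ : Matrix (Fin N) (Fin n) ℝ} (hΦ : Φ.rank = n) :
    Function.Injective Φ.mulVec := by
  have h := LinearMap.finrank_range_add_finrank_ker Φ.mulVecLin
  rw [Module.finrank_pi, Fintype.card_fin] at h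
  have hr : Module.finrank ℝ (LinearMap.range Φ.mulVecLin) = n := hΦ
  have hker : Module.finrank ℝ (LinearMap.ker Φ.mulVecLin) = 0 := by omega
  have : LinearMap.ker Φ.mulVecLin = ⊥ := Submodule.finrank_eq_zero.mp hker
  have hinj : Function.Injective Φ.mulVecLin := LinearMap.ker_eq_bot.mp this
  intro x y hxy
  exact hinj (by simpa [Matrix.mulVecLin_apply] using hxy)

lemma qd_eq_zero {d : Fin N → ℝ} (hdpos : ∀ i, 0 < d i) {u : Fin N → ℝ}
    (h : ∑ i, d i * u i ^ 2 = 0) : u = 0 := by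
  funext i
  have hnn : ∀ j ∈ Finset.univ, 0 ≤ d j * u j ^ 2 :=
    fun j _ => mul_nonneg (hdpos j).le (sq_nonneg _)
  have := (Finset.sum_eq_zero_iff_of_nonneg hnn).mp h i (Finset.mem_univ i)
  have : u i ^ 2 = 0 := by
    rcases mul_eq_zero.mp this with h' | h'
    · exact absurd h' (hdpos i).ne'
    · exact h'
  simpa using pow_eq_zero_iff (n := 2) (by norm_num) |>.mp this

lemma dot_A_eq {Φ : Matrix (Fin N) (Fin n) ℝ} {d : Fin N → ℝ} (v : Fin n → ℝ) :
    v ⬝ᵥ (Φᵀ * Matrix.diagonal d * Φ).mulVec v = ∑ i, d i * ((Φ.mulVec v) i) ^ 2 := by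
  rw [← dot_conj n Φ (Matrix.diagonal d) v]
  simp only [dotProduct, Matrix.mulVec_diagonal]
  exact Finset.sum_congr rfl fun i _ => by ring

lemma A_det_isUnit {Φ : Matrix (Fin N) (Fin n) ℝ} {d : Fin N → ℝ}
    (hdpos : ∀ i, 0 < d i) (hΦ : Φ.rank = n) :
    IsUnit (Φᵀ * Matrix.diagonal d * Φ).det := by
  rw [← Matrix.isUnit_iff_isUnit_det]
  rw [← Matrix.mulVec_injective_iff_isUnit]
  have hΦinj := mulVec_injective_of_rank hΦ
  intro x y hxy
  have hsub : (Φᵀ * Matrix.diagonal d * Φ).mulVec (x - y) = 0 := by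
    rw [Matrix.mulVec_sub, hxy, sub_self]
  have hdot : (x - y) ⬝ᵥ (Φᵀ * Matrix.diagonal d * Φ).mulVec (x - y) = 0 := by
    rw [hsub, dotProduct_zero]
  rw [dot_A_eq] at hdot
  have hu : Φ.mulVec (x - y) = 0 := qd_eq_zero hdpos hdot
  have : x - y = 0 := by
    apply hΦinj
    rw [hu, Matrix.mulVec_zero]
  exact sub_eq_zero.mp this

lemma B_split {P : Matrix (Fin N) (Fin N) ℝ} {d : Fin N → ℝ} {γ : ℝ}
    {Φ : Matrix (Fin N) (Fin n) ℝ} :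
    Φᵀ * Matrix.diagonal d * (γ • P - 1) * Φ =
      γ • (Φᵀ * Matrix.diagonal d * P * Φ) - Φᵀ * Matrix.diagonal d * Φ := by
  rw [Matrix.mul_sub, Matrix.sub_mul, Matrix.mul_smul, Matrix.smul_mul, Matrix.mul_one]

lemma dot_cross {P : Matrix (Fin N) (Fin N) ℝ} {d : Fin N → ℝ}
    {Φ : Matrix (Fin N) (Fin n) ℝ} (v : Fin n → ℝ) :
    v ⬝ᵥ (Φᵀ * Matrix.diagonal d * P * Φ).mulVec v =
      ∑ i, d i * ((Φ.mulVec v) i * (P.mulVec (Φ.mulVec v)) i) := by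
  have h : Φᵀ * Matrix.diagonal d * P * Φ = Φᵀ * (Matrix.diagonal d * P) * Φ := by
    simp only [Matrix.mul_assoc]
  rw [h, ← dot_conj n Φ (Matrix.diagonal d * P) v, ← Matrix.mulVec_mulVec]
  simp only [dotProduct, Matrix.mulVec_diagonal]
  exact Finset.sum_congr rfl fun i _ => by ring

lemma cross_le {P : Matrix (Fin N) (Fin N) ℝ} {d : Fin N → ℝ}
    (hdpos : ∀ i, 0 < d i)
    (hPnonneg : ∀ i j, 0 ≤ P i j) (hProw : ∀ i, ∑ j, P i j = 1)
    (hstat : Matrix.vecMul d P = d) (u : Fin N → ℝ) :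
    (∑ i, d i * (u i * (P.mulVec u) i)) ≤ ∑ i, d i * u i ^ 2 := by
  have hd : ∀ i, 0 ≤ d i := fun i => (hdpos i).le
  set ip := ∑ i, d i * (u i * (P.mulVec u) i) with hip
  set S := ∑ i, d i * u i ^ 2 with hS
  have h1 : ip ^ 2 ≤ S * (∑ i, d i * (P.mulVec u i) ^ 2) := wCS hd u (P.mulVec u)
  have h2 : (∑ i, d i * (P.mulVec u i) ^ 2) ≤ S := P_nonexpansive hd hPnonneg hProw hstat u
  have hS0 : 0 ≤ S := qd_nonneg hd u
  nlinarith [h1, h2, hS0]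

lemma B_det_isUnit {P : Matrix (Fin N) (Fin N) ℝ} {d : Fin N → ℝ} {γ : ℝ}
    {Φ : Matrix (Fin N) (Fin n) ℝ}
    (hPnonneg : ∀ i j, 0 ≤ P i j) (hProw : ∀ i, ∑ j, P i j = 1)
    (hdpos : ∀ i, 0 < d i) (hstat : Matrix.vecMul d P = d)
    (hγ0 : 0 < γ) (hγ1 : γ < 1) (hΦ : Φ.rank = n) :
    IsUnit (Φᵀ * Matrix.diagonal d * (γ • P - 1) * Φ).det := by
  have hd : ∀ i, 0 ≤ d i := fun i => (hdpos i).le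
  have hΦinj := mulVec_injective_of_rank hΦ
  rw [← Matrix.isUnit_iff_isUnit_det, ← Matrix.mulVec_injective_iff_isUnit]
  intro x y hxy
  have hsub : (Φᵀ * Matrix.diagonal d * (γ • P - 1) * Φ).mulVec (x - y) = 0 := by
    rw [Matrix.mulVec_sub, hxy, sub_self]
  set v := x - y with hv
  have hdot : v ⬝ᵥ (Φᵀ * Matrix.diagonal d * (γ • P - 1) * Φ).mulVec v = 0 := by
    rw [hsub, dotProduct_zero]
  rw [B_split, Matrix.sub_mulVec, dotProduct_sub, Matrix.smul_mulVec,
    dotProduct_smul, dot_cross, dot_A_eq] at hdot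
  set u := Φ.mulVec v with hu
  set ip := ∑ i, d i * (u i * (P.mulVec u) i) with hip
  set S := ∑ i, d i * u i ^ 2 with hS
  have hle : ip ≤ S := cross_le hdpos hPnonneg hProw hstat u
  have hS0 : 0 ≤ S := qd_nonneg hd u
  have hS00 : S = 0 := by
    have : γ * ip - S = 0 := by simpa [smul_eq_mul] using hdot
    nlinarith [hle, hS0, hγ0, hγ1, this]
  have huz : u = 0 := qd_eq_zero hdpos (hS ▸ hS00)
  have : v = 0 := hΦinj (by rw [← hu, huz, Matrix.mulVec_zero])
  exact sub_eq_zero.mp this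

noncomputable def tdG (P : Matrix (Fin N) (Fin N) ℝ) (d : Fin N → ℝ) (γ : ℝ)
    (Φ : Matrix (Fin N) (Fin n) ℝ) (R : Fin N → ℝ) (t : Fin n → ℝ) : Fin n → ℝ :=
  (Φᵀ * Matrix.diagonal d * Φ)⁻¹.mulVec
    ((Φᵀ * Matrix.diagonal d).mulVec (R + γ • P.mulVec (Φ.mulVec t)))

noncomputable def tdStar (P : Matrix (Fin N) (Fin N) ℝ) (d : Fin N → ℝ) (γ : ℝ)
    (Φ : Matrix (Fin N) (Fin n) ℝ) (R : Fin N → ℝ) : Fin n → ℝ :=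
  -((Φᵀ * Matrix.diagonal d * (γ • P - 1) * Φ)⁻¹.mulVec ((Φᵀ * Matrix.diagonal d).mulVec R))

lemma tdStar_fixed {P : Matrix (Fin N) (Fin N) ℝ} {d : Fin N → ℝ} {γ : ℝ}
    {Φ : Matrix (Fin N) (Fin n) ℝ} {R : Fin N → ℝ}
    (hB : IsUnit (Φᵀ * Matrix.diagonal d * (γ • P - 1) * Φ).det) :
    (Φᵀ * Matrix.diagonal d * Φ).mulVec (tdStar P d γ Φ R) =
      (Φᵀ * Matrix.diagonal d).mulVec R +
        γ • ((Φᵀ * Matrix.diagonal d).mulVec (P.mulVec (Φ.mulVec (tdStar P d γ Φ R)))) := by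
  set B := Φᵀ * Matrix.diagonal d * (γ • P - 1) * Φ with hBdef
  set s := tdStar P d γ Φ R with hs
  have hBs : B.mulVec s = -((Φᵀ * Matrix.diagonal d).mulVec R) := by
    rw [hs, tdStar, ← hBdef, Matrix.mulVec_neg, Matrix.mulVec_mulVec,
      Matrix.mul_nonsing_inv _ hB, Matrix.one_mulVec]
  have hsplit : B.mulVec s =
      γ • ((Φᵀ * Matrix.diagonal d * P * Φ).mulVec s) -
        (Φᵀ * Matrix.diagonal d * Φ).mulVec s := by
    rw [hBdef, B_split, Matrix.sub_mulVec, Matrix.smul_mulVec]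
  have hcross : (Φᵀ * Matrix.diagonal d * P * Φ).mulVec s =
      (Φᵀ * Matrix.diagonal d).mulVec (P.mulVec (Φ.mulVec s)) := by
    rw [← Matrix.mulVec_mulVec, ← Matrix.mulVec_mulVec]
  rw [hcross] at hsplit
  rw [hsplit] at hBs
  have h3 := congrArg Neg.neg hBs
  rw [neg_sub, neg_neg] at h3
  exact sub_eq_iff_eq_add.mp h3

lemma G_shift {P : Matrix (Fin N) (Fin N) ℝ} {d : Fin N → ℝ} {γ : ℝ}
    {Φ : Matrix (Fin N) (Fin n) ℝ} {R : Fin N → ℝ}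
    (hA : IsUnit (Φᵀ * Matrix.diagonal d * Φ).det)
    (hB : IsUnit (Φᵀ * Matrix.diagonal d * (γ • P - 1) * Φ).det)
    (t : Fin n → ℝ) :
    Φ.mulVec (tdG P d γ Φ R t) - Φ.mulVec (tdStar P d γ Φ R) =
      γ • ((Φ * (Φᵀ * Matrix.diagonal d * Φ)⁻¹ * (Φᵀ * Matrix.diagonal d)).mulVec
        (P.mulVec (Φ.mulVec t - Φ.mulVec (tdStar P d γ Φ R)))) := by
  set A := Φᵀ * Matrix.diagonal d * Φ with hAdef
  set K := Φᵀ * Matrix.diagonal d with hKdef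
  set s := tdStar P d γ Φ R with hs
  have hAG : A.mulVec (tdG P d γ Φ R t) =
      K.mulVec R + γ • (K.mulVec (P.mulVec (Φ.mulVec t))) := by
    rw [tdG, Matrix.mulVec_mulVec, Matrix.mul_nonsing_inv _ hA, Matrix.one_mulVec,
      Matrix.mulVec_add, Matrix.mulVec_smul]
  have hAs : A.mulVec s = K.mulVec R + γ • (K.mulVec (P.mulVec (Φ.mulVec s))) :=
    tdStar_fixed hB
  have hdiff : A.mulVec (tdG P d γ Φ R t - s) =
      γ • (K.mulVec (P.mulVec (Φ.mulVec t - Φ.mulVec s))) := by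
    rw [Matrix.mulVec_sub, hAG, hAs, Matrix.mulVec_sub, Matrix.mulVec_sub, smul_sub]
    abel
  have hrec : tdG P d γ Φ R t - s =
      γ • (A⁻¹.mulVec (K.mulVec (P.mulVec (Φ.mulVec t - Φ.mulVec s)))) := by
    have := congrArg (A⁻¹.mulVec) hdiff
    rwa [Matrix.mulVec_mulVec, Matrix.nonsing_inv_mul _ hA, Matrix.one_mulVec,
      Matrix.mulVec_smul] at this
  calc Φ.mulVec (tdG P d γ Φ R t) - Φ.mulVec s
      = Φ.mulVec (tdG P d γ Φ R t - s) := by rw [Matrix.mulVec_sub]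
    _ = γ • (Φ.mulVec (A⁻¹.mulVec (K.mulVec (P.mulVec (Φ.mulVec t - Φ.mulVec s))))) := by
        rw [hrec, Matrix.mulVec_smul]
    _ = γ • ((Φ * A⁻¹ * K).mulVec (P.mulVec (Φ.mulVec t - Φ.mulVec s))) := by
        rw [Matrix.mulVec_mulVec, Matrix.mulVec_mulVec]

lemma core {P : Matrix (Fin N) (Fin N) ℝ} {d : Fin N → ℝ} {γ : ℝ}
    {Φ : Matrix (Fin N) (Fin n) ℝ} {R : Fin N → ℝ}
    (hn : 0 < n)
    (hPnonneg : ∀ i j, 0 ≤ P i j) (hProw : ∀ i, ∑ j, P i j = 1)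
    (hdpos : ∀ s, 0 < d s) (hstat : Matrix.vecMul d P = d)
    (hγ0 : 0 < γ) (hγ1 : γ < 1) (hΦ : Φ.rank = n)
    (hHerm : (Φᵀ * Matrix.diagonal d * Φ).IsHermitian)
    (tp t : Fin n → ℝ) :
    (∑ i, d i * ((Φ.mulVec tp - Φ.mulVec (tdStar P d γ Φ R)) i) ^ 2) ≤
      ((1 + γ ^ 2) / (1 - γ ^ 2)) * (⨆ i, hHerm.eigenvalues i) *
        (∑ i, (tp i - tdG P d γ Φ R t i) ^ 2) +
      ((1 + γ ^ 2) / 2) * (∑ i, d i * ((Φ.mulVec t - Φ.mulVec (tdStar P d γ Φ R)) i) ^ 2) := by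
  have hd : ∀ i, 0 ≤ d i := fun i => (hdpos i).le
  have hsym : (Φᵀ * Matrix.diagonal d * Φ)ᵀ = Φᵀ * Matrix.diagonal d * Φ := by
    rw [← Matrix.conjTranspose_eq_transpose_of_trivial]; exact hHerm
  have hA : IsUnit (Φᵀ * Matrix.diagonal d * Φ).det := A_det_isUnit hdpos hΦ
  have hB : IsUnit (Φᵀ * Matrix.diagonal d * (γ • P - 1) * Φ).det :=
    B_det_isUnit hPnonneg hProw hdpos hstat hγ0 hγ1 hΦ
  set s := tdStar P d γ Φ R with hs
  set g := tdG P d γ Φ R t with hg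
  set lmax := ⨆ i, hHerm.eigenvalues i with hlmax
  set a : Fin N → ℝ := Φ.mulVec tp - Φ.mulVec g with ha
  set b : Fin N → ℝ := Φ.mulVec g - Φ.mulVec s with hb
  set u : Fin N → ℝ := Φ.mulVec t - Φ.mulVec s with hu
  have hγ2 : (0:ℝ) < γ ^ 2 := by positivity
  have h1γ : (0:ℝ) < 1 - γ ^ 2 := by nlinarith
  set t₀ : ℝ := (1 - γ ^ 2) / (2 * γ ^ 2) with ht₀def
  have ht₀ : 0 < t₀ := by positivity
  -- step 1: split
  have hsplit : (∑ i, d i * ((Φ.mulVec tp - Φ.mulVec s) i) ^ 2) ≤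
      (1 + t₀) * (∑ i, d i * b i ^ 2) + (1 + t₀⁻¹) * (∑ i, d i * a i ^ 2) := by
    have h := qd_add_le hd ht₀ b a
    have he : ∀ i, (Φ.mulVec tp - Φ.mulVec s) i = b i + a i := by
      intro i; simp only [ha, hb, Pi.sub_apply]; ring
    calc (∑ i, d i * ((Φ.mulVec tp - Φ.mulVec s) i) ^ 2)
        = ∑ i, d i * (b i + a i) ^ 2 :=
          Finset.sum_congr rfl fun i _ => by rw [he i]
      _ ≤ _ := h
  -- step 2: contraction bound on b
  have hbbound : (∑ i, d i * b i ^ 2) ≤ γ ^ 2 * (∑ i, d i * u i ^ 2) := by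
    have hbid : b = γ • ((Φ * (Φᵀ * Matrix.diagonal d * Φ)⁻¹ *
        (Φᵀ * Matrix.diagonal d)).mulVec (P.mulVec u)) := G_shift hA hB t
    have h1 : (∑ i, d i * b i ^ 2) = γ ^ 2 * (∑ i, d i *
        (((Φ * (Φᵀ * Matrix.diagonal d * Φ)⁻¹ *
          (Φᵀ * Matrix.diagonal d)).mulVec (P.mulVec u)) i) ^ 2) := by
      rw [hbid, Finset.mul_sum]
      exact Finset.sum_congr rfl fun i _ => by
        simp only [Pi.smul_apply, smul_eq_mul]; ring
    rw [h1]
    have h2 := proj_nonexpansive hd Φ hsym hA (P.mulVec u)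
    have h3 := P_nonexpansive hd hPnonneg hProw hstat u
    nlinarith [h2, h3, hγ2]
  -- step 3: eigenvalue bound on a
  have habound : (∑ i, d i * a i ^ 2) ≤ lmax * (∑ i, (tp i - g i) ^ 2) := by
    have haid : a = Φ.mulVec (tp - g) := by rw [ha, Matrix.mulVec_sub]
    have h1 : (∑ i, d i * a i ^ 2) = (tp - g) ⬝ᵥ
        (Φᵀ * Matrix.diagonal d * Φ).mulVec (tp - g) := by
      rw [haid, dot_A_eq]
    rw [h1]
    have h2 := rayleigh hn hHerm (tp - g)
    have h3 : (tp - g) ⬝ᵥ (tp - g) = ∑ i, (tp i - g i) ^ 2 := by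
      simp only [dotProduct, Pi.sub_apply]
      exact Finset.sum_congr rfl fun i _ => by ring
    rw [← h3]
    exact h2
  -- combine
  have hc1 : (1 + t₀) * γ ^ 2 = (1 + γ ^ 2) / 2 := by
    rw [ht₀def]; field_simp; ring
  have hc2 : 1 + t₀⁻¹ = (1 + γ ^ 2) / (1 - γ ^ 2) := by
    rw [ht₀def]; rw [inv_div]; field_simp; ring
  have hb0 : 0 ≤ ∑ i, d i * b i ^ 2 := qd_nonneg hd b
  have ha0 : 0 ≤ ∑ i, d i * a i ^ 2 := qd_nonneg hd a
  have ht₀0 : (0:ℝ) < 1 + t₀ := by linarith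
  have ht₀i : (0:ℝ) < 1 + t₀⁻¹ := by positivity
  calc (∑ i, d i * ((Φ.mulVec tp - Φ.mulVec s) i) ^ 2)
      ≤ (1 + t₀) * (∑ i, d i * b i ^ 2) + (1 + t₀⁻¹) * (∑ i, d i * a i ^ 2) := hsplit
    _ ≤ (1 + t₀) * (γ ^ 2 * (∑ i, d i * u i ^ 2)) +
        (1 + t₀⁻¹) * (lmax * (∑ i, (tp i - g i) ^ 2)) := by
        gcongr
    _ = ((1 + γ ^ 2) / (1 - γ ^ 2)) * lmax * (∑ i, (tp i - g i) ^ 2) +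
        ((1 + γ ^ 2) / 2) * (∑ i, d i * u i ^ 2) := by
        rw [← hc1, ← hc2]; ring

lemma lmax_nonneg (hn : 0 < n) {Φ : Matrix (Fin N) (Fin n) ℝ} {d : Fin N → ℝ}
    (hd : ∀ i, 0 ≤ d i)
    (hHerm : (Φᵀ * Matrix.diagonal d * Φ).IsHermitian) :
    0 ≤ ⨆ i, hHerm.eigenvalues i := by
  have : Nonempty (Fin n) := ⟨⟨0, hn⟩⟩
  have hpsd : (Φᵀ * Matrix.diagonal d * Φ).PosSemidef := by
    refine .of_dotProduct_mulVec_nonneg hHerm fun x => ?_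
    have : star x = x := by simp
    rw [this, dot_A_eq]
    exact qd_nonneg hd _
  have h0 : 0 ≤ hHerm.eigenvalues ⟨0, hn⟩ := hpsd.eigenvalues_nonneg ⟨0, hn⟩
  exact le_trans h0 (le_ciSup ((Set.finite_range _).bddAbove) _)

lemma tdG_affine {P : Matrix (Fin N) (Fin N) ℝ} {d : Fin N → ℝ} {γ : ℝ}
    {Φ : Matrix (Fin N) (Fin n) ℝ} {R : Fin N → ℝ} (t : Fin n → ℝ) :
    tdG P d γ Φ R t =
      (Φᵀ * Matrix.diagonal d * Φ)⁻¹.mulVec ((Φᵀ * Matrix.diagonal d).mulVec R) +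
      γ • (((Φᵀ * Matrix.diagonal d * Φ)⁻¹ * (Φᵀ * Matrix.diagonal d) * P * Φ).mulVec t) := by
  rw [tdG, Matrix.mulVec_add, Matrix.mulVec_add, Matrix.mulVec_smul, Matrix.mulVec_smul]
  simp only [Matrix.mulVec_mulVec, Matrix.mul_assoc]

lemma memL2_mulVec {Ω : Type*} [MeasurableSpace Ω] {Pr : MeasureTheory.Measure Ω} {k l : ℕ} {u : Ω → Fin k → ℝ}
    (hu : ∀ i, MemLp (fun ω => u ω i) 2 Pr) (M : Matrix (Fin l) (Fin k) ℝ) (s : Fin l) :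
    MemLp (fun ω => (M.mulVec (u ω)) s) 2 Pr := by
  have : (fun ω => (M.mulVec (u ω)) s) = fun ω => ∑ j, M s j * u ω j := by
    funext ω; simp [Matrix.mulVec, dotProduct]
  rw [this]
  exact memLp_finsetSum _ (fun j _ => ((hu j).const_mul (M s j)))

end TD18
end TD18aux

/-- If the square-integrable random vectors `θ, θ⁺` satisfy
`𝔼[‖θ⁺ − G(θ)‖₂²] ≤ ε`, where `G(θ) := (ΦᵀDΦ)⁻¹ΦᵀD(R + γPΦθ)`, then
`𝔼[‖Φθ⁺ − Φθ*‖_D²] ≤ ((1+γ²)/(1−γ²)) λ_max(ΦᵀDΦ) ε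
  + ((1+γ²)/2) 𝔼[‖Φθ − Φθ*‖_D²]`,
where `θ* := −(ΦᵀD(γP − I)Φ)⁻¹ΦᵀDR`. -/
theorem periodic_TD_one_step_squared_error_recursion
    (N n : ℕ) (hN : 0 < N) (hn : 0 < n) (hnN : n ≤ N)
    (P : Matrix (Fin N) (Fin N) ℝ) (d : Fin N → ℝ) (γ : ℝ)
    (Φ : Matrix (Fin N) (Fin n) ℝ) (R : Fin N → ℝ)
    (hPnonneg : ∀ i j, 0 ≤ P i j)
    (hProw : ∀ i, ∑ j, P i j = 1)
    (hdpos : ∀ s, 0 < d s)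
    (hdsum : ∑ s, d s = 1)
    (hstat : Matrix.vecMul d P = d)
    (hγ0 : 0 < γ) (hγ1 : γ < 1)
    (hΦ : Φ.rank = n)
    (hHerm : (Φᵀ * Matrix.diagonal d * Φ).IsHermitian)
    {Ω : Type*} [MeasurableSpace Ω] (Pr : Measure Ω) [IsProbabilityMeasure Pr]
    (ε : ℝ) (hε : 0 ≤ ε)
    (θ θp : Ω → Fin n → ℝ)
    (hL2θ : ∀ i, MemLp (fun ω => θ ω i) 2 Pr)
    (hL2θp : ∀ i, MemLp (fun ω => θp ω i) 2 Pr)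
    (hrec : (∫ ω, (∑ i, (θp ω i -
        ((Φᵀ * Matrix.diagonal d * Φ)⁻¹.mulVec
          ((Φᵀ * Matrix.diagonal d).mulVec
            (R + γ • P.mulVec (Φ.mulVec (θ ω))))) i) ^ 2) ∂Pr) ≤ ε) :
    let D : Matrix (Fin N) (Fin N) ℝ := Matrix.diagonal d
    let sqD : (Fin N → ℝ) → ℝ := fun v => v ⬝ᵥ D.mulVec v
    let θstar : Fin n → ℝ :=
      -((Φᵀ * D * (γ • P - 1) * Φ)⁻¹.mulVec ((Φᵀ * D).mulVec R))
    (∫ ω, sqD (Φ.mulVec (θp ω) - Φ.mulVec θstar) ∂Pr) ≤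
      ((1 + γ ^ 2) / (1 - γ ^ 2)) * (⨆ i, hHerm.eigenvalues i) * ε +
      ((1 + γ ^ 2) / 2) * (∫ ω, sqD (Φ.mulVec (θ ω) - Φ.mulVec θstar) ∂Pr) := by
  intro D sqD θstar
  have hd : ∀ i, 0 ≤ d i := fun i => (hdpos i).le
  have hθstar : θstar = TD18.tdStar P d γ Φ R := rfl
  have hsq : ∀ v : Fin N → ℝ, sqD v = ∑ i, d i * v i ^ 2 := fun v => TD18.sqD_eq d v
  rw [hθstar]
  simp only [hsq]
  set lmax := ⨆ i, hHerm.eigenvalues i with hlmax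
  set c1 : ℝ := (1 + γ ^ 2) / (1 - γ ^ 2) * lmax with hc1
  set c2 : ℝ := (1 + γ ^ 2) / 2 with hc2
  set f : Ω → ℝ := fun ω => ∑ i, (θp ω i - TD18.tdG P d γ Φ R (θ ω) i) ^ 2 with hfdef
  -- membership facts
  have hHcomp : ∀ (u : Ω → Fin n → ℝ), (∀ i, MemLp (fun ω => u ω i) 2 Pr) →
      ∀ s : Fin N, MemLp (fun ω =>
        (Φ.mulVec (u ω) - Φ.mulVec (TD18.tdStar P d γ Φ R)) s) 2 Pr := by
    intro u hu s
    have h2 : (fun ω => (Φ.mulVec (u ω) - Φ.mulVec (TD18.tdStar P d γ Φ R)) s) =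
        fun ω => (Φ.mulVec (u ω)) s - (Φ.mulVec (TD18.tdStar P d γ Φ R)) s := by
      funext ω; simp
    rw [h2]
    exact (TD18.memL2_mulVec hu Φ s).sub (memLp_const _)
  have hGcomp : ∀ i, MemLp (fun ω => TD18.tdG P d γ Φ R (θ ω) i) 2 Pr := by
    intro i
    have h2 : (fun ω => TD18.tdG P d γ Φ R (θ ω) i) =
        fun ω => (((Φᵀ * Matrix.diagonal d * Φ)⁻¹.mulVec
            ((Φᵀ * Matrix.diagonal d).mulVec R)) i
          + γ * (((Φᵀ * Matrix.diagonal d * Φ)⁻¹ * (Φᵀ * Matrix.diagonal d) * P * Φ).mulVec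
            (θ ω)) i) := by
      funext ω
      rw [TD18.tdG_affine]
      simp [smul_eq_mul]
    rw [h2]
    exact (memLp_const (((Φᵀ * Matrix.diagonal d * Φ)⁻¹.mulVec
          ((Φᵀ * Matrix.diagonal d).mulVec R)) i)).add ((TD18.memL2_mulVec hL2θ
      ((Φᵀ * Matrix.diagonal d * Φ)⁻¹ * (Φᵀ * Matrix.diagonal d) * P * Φ) i).const_mul γ)
  -- integrability
  have hIntf : Integrable f Pr :=
    integrable_finset_sum _ (fun i _ => ((hL2θp i).sub (hGcomp i)).integrable_sq)
  have hInth : Integrable (fun ω => ∑ i, d i *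
      ((Φ.mulVec (θp ω) - Φ.mulVec (TD18.tdStar P d γ Φ R)) i) ^ 2) Pr :=
    integrable_finset_sum _ (fun s _ =>
      ((hHcomp θp hL2θp s).integrable_sq).const_mul (d s))
  have hIntg : Integrable (fun ω => ∑ i, d i *
      ((Φ.mulVec (θ ω) - Φ.mulVec (TD18.tdStar P d γ Φ R)) i) ^ 2) Pr :=
    integrable_finset_sum _ (fun s _ =>
      ((hHcomp θ hL2θ s).integrable_sq).const_mul (d s))
  -- pointwise bound
  have hpt : ∀ ω, (∑ i, d i *
      ((Φ.mulVec (θp ω) - Φ.mulVec (TD18.tdStar P d γ Φ R)) i) ^ 2) ≤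
      c1 * f ω + c2 * (∑ i, d i *
        ((Φ.mulVec (θ ω) - Φ.mulVec (TD18.tdStar P d γ Φ R)) i) ^ 2) := by
    intro ω
    have := TD18.core (R := R) hn hPnonneg hProw hdpos hstat hγ0 hγ1 hΦ hHerm (θp ω) (θ ω)
    simpa [hc1, hc2, hfdef, mul_assoc] using this
  have h1γ : (0:ℝ) < 1 - γ ^ 2 := by nlinarith
  have hc1nn : 0 ≤ c1 :=
    mul_nonneg (div_nonneg (by positivity) h1γ.le) (TD18.lmax_nonneg hn hd hHerm)
  have hfε : (∫ ω, f ω ∂Pr) ≤ ε := hrec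
  calc (∫ ω, (∑ i, d i *
        ((Φ.mulVec (θp ω) - Φ.mulVec (TD18.tdStar P d γ Φ R)) i) ^ 2) ∂Pr)
      ≤ ∫ ω, (c1 * f ω + c2 * (∑ i, d i *
          ((Φ.mulVec (θ ω) - Φ.mulVec (TD18.tdStar P d γ Φ R)) i) ^ 2)) ∂Pr :=
        integral_mono hInth ((hIntf.const_mul c1).add (hIntg.const_mul c2)) hpt
    _ = c1 * (∫ ω, f ω ∂Pr) + c2 * (∫ ω, (∑ i, d i *
          ((Φ.mulVec (θ ω) - Φ.mulVec (TD18.tdStar P d γ Φ R)) i) ^ 2) ∂Pr) := by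
        rw [integral_add (hIntf.const_mul c1) (hIntg.const_mul c2),
          integral_const_mul, integral_const_mul]
    _ ≤ c1 * ε + c2 * (∫ ω, (∑ i, d i *
          ((Φ.mulVec (θ ω) - Φ.mulVec (TD18.tdStar P d γ Φ R)) i) ^ 2) ∂Pr) := by
        gcongr
    _ = _ := by rw [hc1, hc2, mul_assoc]
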